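/- arXiv:2005.03160 — 2 statements merged into one kernel-verified Lean document; each statement's English description precedes it below -/
import Mathlib

section
/- Let $V$ be a real vector space, $D : V \to V$ linear, $k \in \mathbb{N}_0$, and set $c(j) = j$ for $j$ even, $c(j) = -2k + j - 1$ for $j$ odd. Suppose $(F_j)_{j \geq 0}$ in $V$ satisfies $c(j+1) F_{j+1} = (-1)^{j+1} D F_j$ for all $j \geq 0$. Then: (a) $D F_{2k} = 0$, equivalently $D^{2k+1} F_0 = 0$; (b) $F_{2j} = \frac{(k-j)!}{2^{2j} j!\, k!} D^{2j} F_0$ for $0 \leq j \leq k$ and $F_{2j+1} = \frac{(k-j-1)!}{2^{2j+1} j!\, k!} D^{2j+1} F_0$ for $0 \leq j \leq k-1$; (c) $F_{2k+2j+1} = \frac{(-1)^j k!}{2^{2j} j! (k+j)!} D^{2j} F_{2k+1}$ and $F_{2k+2j+2} = \frac{(-1)^j k!}{2^{2j+1} j! (k+j+1)!} D^{2j+1} F_{2k+1}$ for all $j \geq 0$. In particular, all $F_j$ are determined by the two elements $F_0$ and $F_{2k+1}$. -/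
/-- Abstract CK-recurrence in superdimension `M = -2k`: if
`c(j+1) F_{j+1} = (-1)^{j+1} D F_j` with `c(j) = j` for even `j` and `c(j) = -2k+j-1`
for odd `j`, then `D F_{2k} = 0` (equivalently `D^{2k+1} F₀ = 0`) and all `F_j` are
determined by the two elements `F₀` and `F_{2k+1}`. -/
theorem CK_recurrence_neg_even (V : Type*) [AddCommGroup V] [Module ℝ V]
    (D : Module.End ℝ V) (k : ℕ)
    (c : ℕ → ℝ)
    (hc_even : ∀ j : ℕ, Even j → c j = (j : ℝ))
    (hc_odd : ∀ j : ℕ, Odd j → c j = -(2 * k : ℝ) + (j : ℝ) - 1)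
    (F : ℕ → V)
    (hF : ∀ j : ℕ, c (j + 1) • F (j + 1) = ((-1 : ℝ) ^ (j + 1)) • D (F j)) :
    D (F (2 * k)) = 0 ∧
    (D ^ (2 * k + 1)) (F 0) = 0 ∧
    (∀ j : ℕ, j ≤ k →
      F (2 * j) = ((Nat.factorial (k - j) : ℝ)
          / (2 ^ (2 * j) * (Nat.factorial j : ℝ) * (Nat.factorial k : ℝ))) •
        (D ^ (2 * j)) (F 0)) ∧
    (∀ j : ℕ, j + 1 ≤ k →
      F (2 * j + 1) = ((Nat.factorial (k - j - 1) : ℝ)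
          / (2 ^ (2 * j + 1) * (Nat.factorial j : ℝ) * (Nat.factorial k : ℝ))) •
        (D ^ (2 * j + 1)) (F 0)) ∧
    (∀ j : ℕ,
      F (2 * k + 2 * j + 1) = (((-1 : ℝ) ^ j * (Nat.factorial k : ℝ))
          / (2 ^ (2 * j) * (Nat.factorial j : ℝ) * (Nat.factorial (k + j) : ℝ))) •
        (D ^ (2 * j)) (F (2 * k + 1))) ∧
    (∀ j : ℕ,
      F (2 * k + 2 * j + 2) = (((-1 : ℝ) ^ j * (Nat.factorial k : ℝ))
          / (2 ^ (2 * j + 1) * (Nat.factorial j : ℝ) * (Nat.factorial (k + j + 1) : ℝ))) •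
        (D ^ (2 * j + 1)) (F (2 * k + 1))) := by
  have factne : ∀ n : ℕ, ((Nat.factorial n : ℝ)) ≠ 0 :=
    fun n => Nat.cast_ne_zero.mpr n.factorial_ne_zero
  have hsolve : ∀ j : ℕ, c (j + 1) ≠ 0 →
      F (j + 1) = (c (j + 1))⁻¹ • (((-1 : ℝ) ^ (j + 1)) • D (F j)) := by
    intro j h
    rw [← hF j, smul_smul, inv_mul_cancel₀ h, one_smul]
  -- even-to-odd step below 2k
  have step1 : ∀ m : ℕ, m < k → F (2 * m + 1) = (2 * ((k : ℝ) - m))⁻¹ • D (F (2 * m)) := by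
    intro m hm
    have hmk : (m : ℝ) < k := by exact_mod_cast hm
    have hco : c (2 * m + 1) = -(2 * ((k : ℝ) - m)) := by
      rw [hc_odd (2 * m + 1) ⟨m, by ring⟩]
      push_cast; ring
    have hne : c (2 * m + 1) ≠ 0 := by
      rw [hco]; intro h
      have : (2 : ℝ) * ((k : ℝ) - m) = 0 := by linarith [neg_eq_zero.mp h]
      nlinarith
    rw [hsolve (2 * m) hne, hco,
      Odd.neg_one_pow (⟨m, by ring⟩ : Odd (2 * m + 1)), smul_smul]
    congr 1
    rw [inv_neg]
    ring
  -- odd-to-even step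
  have step2 : ∀ m : ℕ, F (2 * m + 2) = (2 * (m : ℝ) + 2)⁻¹ • D (F (2 * m + 1)) := by
    intro m
    have hco : c (2 * m + 2) = 2 * (m : ℝ) + 2 := by
      rw [hc_even (2 * m + 2) ⟨m + 1, by ring⟩]; push_cast; ring
    have hne : c (2 * m + 2) ≠ 0 := by rw [hco]; positivity
    have h := hsolve (2 * m + 1) (by rwa [show 2 * m + 1 + 1 = 2 * m + 2 by omega])
    rw [show 2 * m + 1 + 1 = 2 * m + 2 by omega] at h
    rw [h, hco, Even.neg_one_pow (⟨m + 1, by ring⟩ : Even (2 * m + 1 + 1)), one_smul]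
  -- part (b), even
  have heven : ∀ j : ℕ, j ≤ k →
      F (2 * j) = ((Nat.factorial (k - j) : ℝ)
          / (2 ^ (2 * j) * (Nat.factorial j : ℝ) * (Nat.factorial k : ℝ))) •
        (D ^ (2 * j)) (F 0) := by
    intro j
    induction j with
    | zero =>
      intro _
      simp only [Nat.mul_zero, Nat.sub_zero, pow_zero, Nat.factorial_zero, Nat.cast_one,
        one_mul, Module.End.one_apply]
      rw [div_self (factne k), one_smul]
    | succ j ih =>
      intro hjk
      have hjk' : j ≤ k := Nat.le_of_succ_le hjk
      have hjlt : j < k := hjk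
      have h1 : F (2 * (j + 1)) = (2 * (j : ℝ) + 2)⁻¹ • D (F (2 * j + 1)) := by
        rw [show 2 * (j + 1) = 2 * j + 2 by ring]; exact step2 j
      rw [h1, step1 j hjlt, ih hjk']
      simp only [map_smul, smul_smul]
      have hop : D (D ((D ^ (2 * j)) (F 0))) = (D ^ (2 * (j + 1))) (F 0) := by
        rw [show 2 * (j + 1) = 2 * j + 1 + 1 by ring, pow_succ', pow_succ',
          Module.End.mul_apply, Module.End.mul_apply]
      rw [hop]
      congr 1
      have hfac : (Nat.factorial (k - j) : ℝ)
          = ((k : ℝ) - j) * (Nat.factorial (k - (j + 1)) : ℝ) := by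
        rw [show k - j = (k - (j + 1)) + 1 by omega, Nat.factorial_succ]
        push_cast [Nat.cast_sub hjk]
        ring
      have hkj : (k : ℝ) - j ≠ 0 := by
        have : (j : ℝ) < k := by exact_mod_cast hjlt
        intro h; linarith
      rw [hfac, Nat.factorial_succ]
      have h2 : (2 : ℝ) * (j : ℝ) + 2 ≠ 0 := by positivity
      have h3 : (2 : ℝ) ^ (2 * j) ≠ 0 := by positivity
      push_cast
      field_simp
      ring
  -- part (b), odd
  have hodd : ∀ j : ℕ, j + 1 ≤ k →
      F (2 * j + 1) = ((Nat.factorial (k - j - 1) : ℝ)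
          / (2 ^ (2 * j + 1) * (Nat.factorial j : ℝ) * (Nat.factorial k : ℝ))) •
        (D ^ (2 * j + 1)) (F 0) := by
    intro j hjk
    have hjlt : j < k := hjk
    rw [step1 j hjlt, heven j (Nat.le_of_lt hjlt), map_smul, smul_smul]
    have hop : D ((D ^ (2 * j)) (F 0)) = (D ^ (2 * j + 1)) (F 0) := by
      rw [pow_succ', Module.End.mul_apply]
    rw [hop]
    congr 1
    have hfac : (Nat.factorial (k - j) : ℝ)
        = ((k : ℝ) - j) * (Nat.factorial (k - j - 1) : ℝ) := by
      nth_rewrite 1 [show k - j = (k - j - 1) + 1 by omega]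
      rw [Nat.factorial_succ]
      have hc1 : ((k - j - 1 : ℕ) : ℝ) = (k : ℝ) - j - 1 := by
        have e : k - j - 1 = k - (j + 1) := by omega
        rw [e, Nat.cast_sub hjk]
        push_cast; ring
      push_cast [hc1]
      ring
    have hkj : (k : ℝ) - j ≠ 0 := by
      have : (j : ℝ) < k := by exact_mod_cast hjlt
      intro h; linarith
    rw [hfac]
    field_simp
    ring
  -- part (a)
  have hDF2k : D (F (2 * k)) = 0 := by
    have h1 := hF (2 * k)
    have hc0 : c (2 * k + 1) = 0 := by
      rw [hc_odd (2 * k + 1) ⟨k, by ring⟩]; push_cast; ring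
    rw [hc0, zero_smul, Odd.neg_one_pow (⟨k, by ring⟩ : Odd (2 * k + 1)),
      neg_one_smul] at h1
    exact neg_eq_zero.mp h1.symm
  have hD0 : (D ^ (2 * k + 1)) (F 0) = 0 := by
    have h := hDF2k
    rw [heven k le_rfl, map_smul] at h
    have hop : D ((D ^ (2 * k)) (F 0)) = (D ^ (2 * k + 1)) (F 0) := by
      rw [pow_succ', Module.End.mul_apply]
    rw [hop] at h
    have hcoef : ((Nat.factorial (k - k) : ℝ)
        / (2 ^ (2 * k) * (Nat.factorial k : ℝ) * (Nat.factorial k : ℝ))) ≠ 0 := by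
      apply div_ne_zero (factne _)
      have := factne k
      positivity
    rcases smul_eq_zero.mp h with h' | h'
    · exact absurd h' hcoef
    · exact h'
  -- tail steps
  have tstep1 : ∀ m : ℕ, F (2 * k + 2 * m + 2)
      = (2 * (k : ℝ) + 2 * m + 2)⁻¹ • D (F (2 * k + 2 * m + 1)) := by
    intro m
    have hco : c (2 * k + 2 * m + 2) = 2 * (k : ℝ) + 2 * m + 2 := by
      rw [hc_even (2 * k + 2 * m + 2) ⟨k + m + 1, by ring⟩]; push_cast; ring
    have hne : c (2 * k + 2 * m + 2) ≠ 0 := by rw [hco]; positivity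
    have h := hsolve (2 * k + 2 * m + 1)
      (by rwa [show 2 * k + 2 * m + 1 + 1 = 2 * k + 2 * m + 2 by omega])
    rw [show 2 * k + 2 * m + 1 + 1 = 2 * k + 2 * m + 2 by omega] at h
    rw [h, hco, Even.neg_one_pow (⟨k + m + 1, by ring⟩ : Even (2 * k + 2 * m + 1 + 1)),
      one_smul]
  have tstep2 : ∀ m : ℕ, F (2 * k + 2 * m + 3)
      = -((2 * (m : ℝ) + 2)⁻¹) • D (F (2 * k + 2 * m + 2)) := by
    intro m
    have hco : c (2 * k + 2 * m + 3) = 2 * (m : ℝ) + 2 := by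
      rw [hc_odd (2 * k + 2 * m + 3) ⟨k + m + 1, by ring⟩]; push_cast; ring
    have hne : c (2 * k + 2 * m + 3) ≠ 0 := by rw [hco]; positivity
    have h := hsolve (2 * k + 2 * m + 2)
      (by rwa [show 2 * k + 2 * m + 2 + 1 = 2 * k + 2 * m + 3 by omega])
    rw [show 2 * k + 2 * m + 2 + 1 = 2 * k + 2 * m + 3 by omega] at h
    rw [h, hco, Odd.neg_one_pow (⟨k + m + 1, by ring⟩ : Odd (2 * k + 2 * m + 2 + 1)),
      smul_smul]
    congr 1
    ring
  -- tail formulas, combined induction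
  have htail : ∀ j : ℕ,
      (F (2 * k + 2 * j + 1) = (((-1 : ℝ) ^ j * (Nat.factorial k : ℝ))
          / (2 ^ (2 * j) * (Nat.factorial j : ℝ) * (Nat.factorial (k + j) : ℝ))) •
        (D ^ (2 * j)) (F (2 * k + 1))) ∧
      (F (2 * k + 2 * j + 2) = (((-1 : ℝ) ^ j * (Nat.factorial k : ℝ))
          / (2 ^ (2 * j + 1) * (Nat.factorial j : ℝ) * (Nat.factorial (k + j + 1) : ℝ))) •
        (D ^ (2 * j + 1)) (F (2 * k + 1))) := by
    intro j
    induction j with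
    | zero =>
      have hO : F (2 * k + 2 * 0 + 1) = (((-1 : ℝ) ^ 0 * (Nat.factorial k : ℝ))
          / (2 ^ (2 * 0) * (Nat.factorial 0 : ℝ) * (Nat.factorial (k + 0) : ℝ))) •
        (D ^ (2 * 0)) (F (2 * k + 1)) := by
        simp only [Nat.mul_zero, Nat.add_zero, pow_zero, Nat.factorial_zero, Nat.cast_one,
          one_mul, mul_one, Module.End.one_apply]
        rw [div_self (factne k), one_smul]
      refine ⟨hO, ?_⟩
      have h1 := tstep1 0
      have hop : D ((D ^ (2 * 0)) (F (2 * k + 1))) = (D ^ (2 * 0 + 1)) (F (2 * k + 1)) := by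
        rw [pow_succ' D (2 * 0), Module.End.mul_apply]
      conv_lhs => rw [h1, hO]
      simp only [map_smul, smul_smul]
      rw [hop]
      congr 1
      simp only [Nat.mul_zero, Nat.add_zero, pow_zero, Nat.factorial_zero, Nat.cast_one,
        Nat.cast_zero, mul_zero, pow_one]
      rw [Nat.factorial_succ]
      have h2 : (2 : ℝ) * (k : ℝ) + 2 ≠ 0 := by positivity
      push_cast
      field_simp
      ring
    | succ j ih =>
      have hO : F (2 * k + 2 * (j + 1) + 1) = (((-1 : ℝ) ^ (j + 1) * (Nat.factorial k : ℝ))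
          / (2 ^ (2 * (j + 1)) * (Nat.factorial (j + 1) : ℝ)
              * (Nat.factorial (k + (j + 1)) : ℝ))) •
          (D ^ (2 * (j + 1))) (F (2 * k + 1)) := by
        have h1 : F (2 * k + 2 * (j + 1) + 1)
            = -((2 * (j : ℝ) + 2)⁻¹) • D (F (2 * k + 2 * j + 2)) := by
          rw [show 2 * k + 2 * (j + 1) + 1 = 2 * k + 2 * j + 3 by ring]
          exact tstep2 j
        rw [h1, ih.2, map_smul, smul_smul]
        have hop : D ((D ^ (2 * j + 1)) (F (2 * k + 1)))
            = (D ^ (2 * (j + 1))) (F (2 * k + 1)) := by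
          rw [show 2 * (j + 1) = 2 * j + 1 + 1 by ring, pow_succ' D (2 * j + 1),
            Module.End.mul_apply]
        rw [hop]
        congr 1
        rw [Nat.factorial_succ j, show k + (j + 1) = k + j + 1 by omega,
          Nat.factorial_succ (k + j)]
        have h2 : (2 : ℝ) * (j : ℝ) + 2 ≠ 0 := by positivity
        push_cast
        field_simp
        ring
      refine ⟨hO, ?_⟩
      have h1 : F (2 * k + 2 * (j + 1) + 2)
          = (2 * (k : ℝ) + 2 * ((j : ℝ) + 1) + 2)⁻¹ • D (F (2 * k + 2 * (j + 1) + 1)) := by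
        have h := tstep1 (j + 1)
        push_cast at h
        exact h
      rw [h1, hO, map_smul, smul_smul]
      have hop : D ((D ^ (2 * (j + 1))) (F (2 * k + 1)))
          = (D ^ (2 * (j + 1) + 1)) (F (2 * k + 1)) := by
        rw [pow_succ', Module.End.mul_apply]
      rw [hop]
      congr 1
      rw [show k + (j + 1) + 1 = (k + (j + 1)) + 1 from rfl, Nat.factorial_succ (k + (j + 1))]
      have h2 : (2 : ℝ) * (k : ℝ) + 2 * ((j : ℝ) + 1) + 2 ≠ 0 := by positivity
      push_cast
      field_simp
      ring
  exact ⟨hDF2k, hD0, heven, hodd, fun j => (htail j).1, fun j => (htail j).2⟩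
end

section
/- Let $R : \mathbb{R}^m \to \mathbb{R}$ be a homogeneous polynomial of degree $2j$, and let $\Delta$ be the Laplacian on $\mathbb{R}^m$. Then for all nonnegative integers $\ell$, $\Delta^{j+\ell}\left[ |x|^{2\ell} R(x) \right] = 4^{\ell}\, \frac{(j+\ell)!}{j!}\, \frac{\Gamma\left(j + \ell + \frac{m}{2}\right)}{\Gamma\left(j + \frac{m}{2}\right)}\; \Delta^{j}[R](x)$ as an identity of polynomials (note $\Delta^j R$ is a constant). -/
namespace LaplacianAux
open MvPolynomial Finset

variable {m : ℕ}

noncomputable def Lp (m : ℕ) (p : MvPolynomial (Fin m) ℝ) : MvPolynomial (Fin m) ℝ :=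
  ∑ i : Fin m, pderiv i (pderiv i p)

noncomputable def qp (m : ℕ) : MvPolynomial (Fin m) ℝ := ∑ i : Fin m, X i ^ 2

lemma pderiv_qp (i : Fin m) : pderiv i (qp m) = 2 * X i := by
  rw [qp, map_sum]
  rw [Finset.sum_eq_single i]
  · rw [pderiv_pow]; simp [pderiv_X_self]
  · intro j _ hj
    rw [pderiv_pow, pderiv_X_of_ne hj]
    ring
  · simp

lemma qp_isHomogeneous : (qp m).IsHomogeneous 2 := by
  apply MvPolynomial.IsHomogeneous.sum
  intro i _
  simpa using (isHomogeneous_X ℝ i).pow 2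

lemma Lp_add (p q : MvPolynomial (Fin m) ℝ) : Lp m (p + q) = Lp m p + Lp m q := by
  simp [Lp, Finset.sum_add_distrib]

lemma Lp_C_mul (r : ℝ) (p : MvPolynomial (Fin m) ℝ) : Lp m (C r * p) = C r * Lp m p := by
  simp [Lp, pderiv_C_mul, Finset.mul_sum]

lemma Lp_iter_add (k : ℕ) (p q : MvPolynomial (Fin m) ℝ) :
    (Lp m)^[k] (p + q) = (Lp m)^[k] p + (Lp m)^[k] q := by
  induction k generalizing p q with
  | zero => simp
  | succ k ih => simp [Function.iterate_succ_apply, Lp_add, ih]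

lemma Lp_iter_C_mul (k : ℕ) (r : ℝ) (p : MvPolynomial (Fin m) ℝ) :
    (Lp m)^[k] (C r * p) = C r * (Lp m)^[k] p := by
  induction k generalizing p with
  | zero => simp
  | succ k ih => simp [Function.iterate_succ_apply, Lp_C_mul, ih]

lemma Lp_q_mul (p : MvPolynomial (Fin m) ℝ) (n : ℕ)
    (heuler : ∑ i : Fin m, X i * pderiv i p = C (n : ℝ) * p) :
    Lp m (qp m * p) = qp m * Lp m p + C (4 * n + 2 * m : ℝ) * p := by
  have h1 : ∀ i : Fin m, pderiv i (pderiv i (qp m * p))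
      = 2 * p + 4 * (X i * pderiv i p) + qp m * pderiv i (pderiv i p) := by
    intro i
    have h2 : pderiv i (2 : MvPolynomial (Fin m) ℝ) = 0 := by
      have : (2 : MvPolynomial (Fin m) ℝ) = C 2 := (map_ofNat C 2).symm
      rw [this, pderiv_C]
    simp only [pderiv_mul, map_add, pderiv_qp, h2, pderiv_X_self]
    ring
  rw [Lp]
  simp_rw [h1]
  rw [Finset.sum_add_distrib, Finset.sum_add_distrib, Finset.sum_const, ← Finset.mul_sum, heuler,
    ← Finset.mul_sum]
  rw [Finset.card_univ, Fintype.card_fin, nsmul_eq_mul]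
  have hm : ((m : ℕ) : MvPolynomial (Fin m) ℝ) = C (m : ℝ) := by
    simp
  rw [hm, ← Lp]
  simp only [map_add, map_mul, map_ofNat]
  ring


lemma X_mul_pderiv_monomial (i : Fin m) (d : Fin m →₀ ℕ) (c : ℝ) :
    X i * pderiv i (monomial d c) = monomial d (c * d i) := by
  rw [pderiv_monomial]
  by_cases h : d i = 0
  · simp [h]
  · rw [X, monomial_mul, one_mul, add_tsub_cancel_of_le]
    exact Finsupp.single_le_iff.mpr (Nat.one_le_iff_ne_zero.mpr h)

lemma sum_univ_eq_degree (d : Fin m →₀ ℕ) : ∑ i : Fin m, d i = d.degree := by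
  rw [Finsupp.degree]
  exact (Finset.sum_subset (Finset.subset_univ _)
    (fun i _ hi => Finsupp.notMem_support_iff.mp hi)).symm

lemma euler {p : MvPolynomial (Fin m) ℝ} {n : ℕ} (hp : p.IsHomogeneous n) :
    ∑ i : Fin m, X i * pderiv i p = C (n : ℝ) * p := by
  calc ∑ i : Fin m, X i * pderiv i p
      = ∑ i : Fin m, ∑ d ∈ p.support, (X i * pderiv i (monomial d (coeff d p))) := by
        refine Finset.sum_congr rfl fun i _ => ?_
        conv_lhs => rw [p.as_sum]
        rw [map_sum, Finset.mul_sum]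
    _ = ∑ d ∈ p.support, ∑ i : Fin m, (X i * pderiv i (monomial d (coeff d p))) :=
        Finset.sum_comm
    _ = ∑ d ∈ p.support, monomial d (coeff d p * n) := by
        refine Finset.sum_congr rfl fun d hd => ?_
        simp_rw [X_mul_pderiv_monomial]
        rw [← map_sum (monomial d)]
        congr 1
        rw [← Finset.mul_sum]
        congr 1
        have hdeg : d.degree = n := by
          rw [Finsupp.degree_eq_weight_one]
          exact hp (MvPolynomial.mem_support_iff.mp hd)
        rw [← hdeg, ← sum_univ_eq_degree]
        push_cast
        rfl
    _ = C (n : ℝ) * p := by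
        conv_rhs => rw [p.as_sum]
        rw [Finset.mul_sum]
        exact Finset.sum_congr rfl fun d hd => by
          rw [C_mul_monomial, mul_comm]

lemma degree_sub_single (d : Fin m →₀ ℕ) (i : Fin m) (h : d i ≠ 0) :
    (d - Finsupp.single i 1).degree + 1 = d.degree := by
  have hle : Finsupp.single i 1 ≤ d := Finsupp.single_le_iff.mpr (Nat.one_le_iff_ne_zero.mpr h)
  have : d = (d - Finsupp.single i 1) + Finsupp.single i 1 := (tsub_add_cancel_of_le hle).symm
  conv_rhs => rw [this]
  simp_rw [Finsupp.degree_eq_weight_one, map_add]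
  congr 1
  rw [← Finsupp.degree_eq_weight_one, Finsupp.degree_single]

lemma pderiv_isHomogeneous {p : MvPolynomial (Fin m) ℝ} {n : ℕ}
    (hp : p.IsHomogeneous (n + 1)) (i : Fin m) : (pderiv i p).IsHomogeneous n := by
  rw [p.as_sum, map_sum]
  apply MvPolynomial.IsHomogeneous.sum
  intro d hd
  rw [pderiv_monomial]
  by_cases h : d i = 0
  · simp [h, isHomogeneous_zero]
  · apply isHomogeneous_monomial
    have hdeg : d.degree = n + 1 := by
      rw [Finsupp.degree_eq_weight_one]
      exact hp (MvPolynomial.mem_support_iff.mp hd)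
    have := degree_sub_single d i h
    omega

lemma pderiv_of_isHomogeneous_zero {p : MvPolynomial (Fin m) ℝ}
    (hp : p.IsHomogeneous 0) (i : Fin m) : pderiv i p = 0 := by
  rw [p.as_sum, map_sum]
  apply Finset.sum_eq_zero
  intro d hd
  have hdeg : d.degree = 0 := by
    rw [Finsupp.degree_eq_weight_one]
    exact hp (MvPolynomial.mem_support_iff.mp hd)
  have hd0 : d = 0 := (Finsupp.degree_eq_zero_iff d).mp hdeg
  subst hd0
  simp

lemma Lp_isHomogeneous {p : MvPolynomial (Fin m) ℝ} {n : ℕ}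
    (hp : p.IsHomogeneous (n + 2)) : (Lp m p).IsHomogeneous n := by
  apply MvPolynomial.IsHomogeneous.sum
  intro i _
  exact pderiv_isHomogeneous (pderiv_isHomogeneous hp i) i

lemma Lp_of_isHomogeneous_zero {p : MvPolynomial (Fin m) ℝ}
    (hp : p.IsHomogeneous 0) : Lp m p = 0 := by
  apply Finset.sum_eq_zero
  intro i _
  rw [pderiv_of_isHomogeneous_zero hp i, map_zero]

lemma step_one : ∀ (j : ℕ) (R : MvPolynomial (Fin m) ℝ), R.IsHomogeneous (2 * j) →
    (Lp m)^[j + 1] (qp m * R) = C (((2 * j + 2) * (2 * j + m) : ℝ)) * (Lp m)^[j] R := by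
  intro j
  induction j with
  | zero =>
    intro R hR
    rw [Function.iterate_one, Function.iterate_zero, id_eq,
      Lp_q_mul R 0 (euler (by simpa using hR)),
      Lp_of_isHomogeneous_zero (by simpa using hR)]
    push_cast
    ring_nf
  | succ j ih =>
    intro R hR
    have hR' : R.IsHomogeneous (2 * j + 2) := by
      have : 2 * (j + 1) = 2 * j + 2 := by ring
      rwa [this] at hR
    have hLpR : (Lp m R).IsHomogeneous (2 * j) := Lp_isHomogeneous hR'
    rw [Function.iterate_succ_apply,
      Lp_q_mul R (2 * (j + 1)) (euler hR),
      Lp_iter_add, Lp_iter_C_mul, ih (Lp m R) hLpR, ← Function.iterate_succ_apply]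
    simp only [Nat.succ_eq_add_one]
    rw [← add_mul, ← map_add]
    congr 2
    push_cast
    ring

lemma main_poly : ∀ (ℓ j : ℕ) (R : MvPolynomial (Fin m) ℝ), R.IsHomogeneous (2 * j) →
    (Lp m)^[j + ℓ] ((qp m) ^ ℓ * R)
      = C (∏ i ∈ Finset.range ℓ, ((2 * j + 2 + 2 * i) * (2 * j + 2 * i + m) : ℝ))
          * (Lp m)^[j] R := by
  intro ℓ
  induction ℓ with
  | zero => intro j R hR; simp
  | succ ℓ ih =>
    intro j R hR
    have hqR : (qp m * R).IsHomogeneous (2 * (j + 1)) := by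
      have := qp_isHomogeneous.mul hR
      have h2 : 2 + 2 * j = 2 * (j + 1) := by ring
      rwa [h2] at this
    have key : (qp m) ^ (ℓ + 1) * R = (qp m) ^ ℓ * (qp m * R) := by ring
    have hjl : j + (ℓ + 1) = (j + 1) + ℓ := by ring
    rw [key, hjl, ih (j + 1) (qp m * R) hqR, step_one j R hR, ← mul_assoc, ← map_mul]
    congr 2
    rw [Finset.prod_range_succ']
    push_cast
    rw [show ((2:ℝ) * ↑j + 2) * (2 * ↑j + ↑m) = (2 * ↑j + 2 + 2 * 0) * (2 * ↑j + 2 * 0 + ↑m) by ring]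
    congr 1
    exact Finset.prod_congr rfl fun i _ => by push_cast; ring

lemma hasFDerivAt_eval (p : MvPolynomial (Fin m) ℝ) (x : Fin m → ℝ) :
    HasFDerivAt (fun y : Fin m → ℝ => eval y p)
      (∑ i : Fin m, eval x (pderiv i p) •
        (ContinuousLinearMap.proj (R := ℝ) (φ := fun _ : Fin m => ℝ) i)) x := by
  induction p using MvPolynomial.induction_on with
  | C a =>
    simp only [eval_C, pderiv_C, map_zero, zero_smul, Finset.sum_const_zero]
    exact hasFDerivAt_const a x
  | add p q hp hq =>
    simp only [map_add, add_smul, Finset.sum_add_distrib]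
    exact hp.add hq
  | mul_X p n hp =>
    have hXn : HasFDerivAt (fun y : Fin m → ℝ => y n)
        (ContinuousLinearMap.proj (R := ℝ) (φ := fun _ : Fin m => ℝ) n) x :=
      by exact (ContinuousLinearMap.proj (R := ℝ) (φ := fun _ : Fin m => ℝ) n).hasFDerivAt (x := x)
    have heq : (∑ i : Fin m, eval x (pderiv i (p * X n)) •
          (ContinuousLinearMap.proj (R := ℝ) (φ := fun _ : Fin m => ℝ) i))
        = eval x p • (ContinuousLinearMap.proj (R := ℝ) (φ := fun _ : Fin m => ℝ) n) +
          (∑ i : Fin m, eval x (pderiv i p) •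
            (ContinuousLinearMap.proj (R := ℝ) (φ := fun _ : Fin m => ℝ) i)).smulRight (x n) := by
      ext v
      simp only [ContinuousLinearMap.add_apply, ContinuousLinearMap.smulRight_apply,
        ContinuousLinearMap.coe_sum', Finset.sum_apply, ContinuousLinearMap.coe_smul',
        Pi.smul_apply, ContinuousLinearMap.proj_apply, smul_eq_mul, pderiv_mul, map_add, map_mul,
        eval_X, pderiv_X, Pi.single_apply]
      rw [Finset.sum_congr rfl (fun i (_ : i ∈ Finset.univ) => by
        rw [add_mul] : ∀ i ∈ Finset.univ, _ = _), Finset.sum_add_distrib, add_comm]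
      congr 1
      · rw [Finset.sum_eq_single n]
        · simp
        · intro i _ hi
          rw [if_neg (fun h => hi h.symm)]
          simp
        · simp
      · rw [Finset.sum_mul]
        exact Finset.sum_congr rfl fun i _ => by ring
    have := hp.mul' hXn
    simp only [map_mul, eval_X]
    exact heq ▸ this

lemma fderiv_eval_single (p : MvPolynomial (Fin m) ℝ) (x : Fin m → ℝ) (i : Fin m) :
    fderiv ℝ (fun y : Fin m → ℝ => eval y p) x (Pi.single i 1) = eval x (pderiv i p) := by
  rw [(hasFDerivAt_eval p x).fderiv]
  simp only [ContinuousLinearMap.coe_sum', Finset.sum_apply, ContinuousLinearMap.coe_smul',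
    Pi.smul_apply, ContinuousLinearMap.proj_apply, smul_eq_mul]
  rw [Finset.sum_eq_single i]
  · simp
  · intro j _ hj
    rw [Pi.single_eq_of_ne hj]
    ring
  · simp

lemma gamma_prod (a : ℝ) (ha : 0 < a) (ℓ : ℕ) :
    Real.Gamma (a + ℓ) = (∏ i ∈ Finset.range ℓ, (a + i)) * Real.Gamma a := by
  induction ℓ with
  | zero => simp
  | succ ℓ ih =>
    have h1 : a + (ℓ + 1 : ℕ) = (a + ℓ) + 1 := by push_cast; ring
    rw [h1, Real.Gamma_add_one (by positivity), ih, Finset.prod_range_succ]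
    ring

lemma fact_prod (j ℓ : ℕ) :
    ((j + ℓ).factorial : ℝ) = (j.factorial : ℝ) * ∏ i ∈ Finset.range ℓ, ((j : ℝ) + 1 + i) := by
  induction ℓ with
  | zero => simp
  | succ ℓ ih =>
    have : j + (ℓ + 1) = (j + ℓ) + 1 := by ring
    rw [this, Nat.factorial_succ, Finset.prod_range_succ]
    push_cast
    rw [ih]
    ring

lemma delta_iter_eval (m : ℕ) (Δ : ((Fin m → ℝ) → ℝ) → ((Fin m → ℝ) → ℝ))
    (hΔ : ∀ f : (Fin m → ℝ) → ℝ, ∀ x : Fin m → ℝ,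
      Δ f x = ∑ i : Fin m,
        fderiv ℝ (fun y => fderiv ℝ f y (Pi.single i 1)) x (Pi.single i 1))
    (k : ℕ) (p : MvPolynomial (Fin m) ℝ) :
    Δ^[k] (fun x => eval x p) = fun x => eval x ((Lp m)^[k] p) := by
  induction k generalizing p with
  | zero => simp
  | succ k ih =>
    rw [Function.iterate_succ_apply]
    have hone : Δ (fun x => eval x p) = fun x => eval x (Lp m p) := by
      funext x
      rw [hΔ, Lp, map_sum]
      refine Finset.sum_congr rfl fun i _ => ?_
      have h1 : (fun y : Fin m → ℝ => fderiv ℝ (fun z : Fin m → ℝ => eval z p) y (Pi.single i 1))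
          = fun y : Fin m → ℝ => eval y (pderiv i p) := funext fun y => fderiv_eval_single p y i
      rw [h1, fderiv_eval_single]
    rw [hone, ih]
    simp only [Function.iterate_succ_apply]

end LaplacianAux

open LaplacianAux MvPolynomial in
/-- For a homogeneous polynomial `R` of degree `2j` on `ℝ^m` and the Euclidean Laplacian `Δ`,
`Δ^{j+ℓ}[|x|^{2ℓ} R] = 4^ℓ (j+ℓ)!/j! ⬝ Γ(j+ℓ+m/2)/Γ(j+m/2) ⬝ Δ^j[R]`. -/
theorem laplacian_power_norm_mul (m : ℕ) (hm : 0 < m) (j ℓ : ℕ)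
    (R : MvPolynomial (Fin m) ℝ)
    (hR : R ∈ MvPolynomial.homogeneousSubmodule (Fin m) ℝ (2 * j))
    (Δ : ((Fin m → ℝ) → ℝ) → ((Fin m → ℝ) → ℝ))
    (hΔ : ∀ f : (Fin m → ℝ) → ℝ, ∀ x : Fin m → ℝ,
      Δ f x = ∑ i : Fin m,
        fderiv ℝ (fun y => fderiv ℝ f y (Pi.single i 1)) x (Pi.single i 1)) :
    ∀ x : Fin m → ℝ,
      Δ^[j + ℓ] (fun x : Fin m → ℝ => (∑ i : Fin m, x i ^ 2) ^ ℓ * MvPolynomial.eval x R) x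
        = 4 ^ ℓ * ((Nat.factorial (j + ℓ) : ℝ) / (Nat.factorial j : ℝ))
            * (Real.Gamma ((j : ℝ) + (ℓ : ℝ) + (m : ℝ) / 2)
              / Real.Gamma ((j : ℝ) + (m : ℝ) / 2))
            * Δ^[j] (fun x : Fin m → ℝ => MvPolynomial.eval x R) x := by
  intro x
  have hm2 : (0 : ℝ) < (j : ℝ) + (m : ℝ) / 2 := by
    have : (1 : ℝ) ≤ (m : ℝ) := by exact_mod_cast hm
    positivity
  -- constant computation
  have hgamma : Real.Gamma ((j : ℝ) + (ℓ : ℝ) + (m : ℝ) / 2)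
      = (∏ i ∈ Finset.range ℓ, ((j : ℝ) + (m : ℝ) / 2 + i)) * Real.Gamma ((j : ℝ) + (m : ℝ) / 2) := by
    have := gamma_prod ((j : ℝ) + (m : ℝ) / 2) hm2 ℓ
    rw [show (j : ℝ) + (ℓ : ℝ) + (m : ℝ) / 2 = (j : ℝ) + (m : ℝ) / 2 + (ℓ : ℕ) by push_cast; ring]
    exact this
  have hΓne : Real.Gamma ((j : ℝ) + (m : ℝ) / 2) ≠ 0 :=
    ne_of_gt (Real.Gamma_pos_of_pos hm2)
  have hconst : (4 : ℝ) ^ ℓ * ((Nat.factorial (j + ℓ) : ℝ) / (Nat.factorial j : ℝ))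
      * (Real.Gamma ((j : ℝ) + (ℓ : ℝ) + (m : ℝ) / 2) / Real.Gamma ((j : ℝ) + (m : ℝ) / 2))
      = ∏ i ∈ Finset.range ℓ, ((2 * (j:ℝ) + 2 + 2 * i) * (2 * (j:ℝ) + 2 * i + (m:ℝ))) := by
    have hfactne : (Nat.factorial j : ℝ) ≠ 0 := by exact_mod_cast Nat.factorial_ne_zero j
    rw [hgamma, fact_prod j ℓ, mul_div_assoc _ (Real.Gamma _) (Real.Gamma _),
      div_self hΓne, mul_one, mul_comm ((j.factorial : ℝ)) _, mul_div_assoc,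
      div_self hfactne, mul_one]
    rw [show (4 : ℝ) ^ ℓ = ∏ _i ∈ Finset.range ℓ, (4 : ℝ) by
      rw [Finset.prod_const, Finset.card_range]]
    rw [← Finset.prod_mul_distrib, ← Finset.prod_mul_distrib]
    exact Finset.prod_congr rfl fun i _ => by ring
  -- function rewriting
  have hfun : (fun x : Fin m → ℝ => (∑ i : Fin m, x i ^ 2) ^ ℓ * MvPolynomial.eval x R)
      = fun x : Fin m → ℝ => MvPolynomial.eval x ((qp m) ^ ℓ * R) := by
    funext y
    rw [map_mul, map_pow]
    congr 2
    simp [qp]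
  rw [hfun, delta_iter_eval m Δ hΔ, delta_iter_eval m Δ hΔ,
    main_poly ℓ j R ((MvPolynomial.mem_homogeneousSubmodule _ _).mp hR)]
  simp only [map_mul, eval_C]
  rw [hconst]
end
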